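/- Let H be a strongly primary monoid that is not half-factorial. Then for every nonunit a ∈ H the limit ρ̄(a) = lim_{n→∞} ρ(a^n) exists and equals ρ(H); that is, R̄(H) = {ρ(H)}. In particular, H is asymptotic fully elastic. -/

import Mathlib

open Filter Topology

/-- The set of factorization lengths of `a`: the set of all `k` such that `a` is a
product of `k` atoms (irreducibles); by convention it is `{0}` for units. -/
noncomputable def lengthSet (H : Type*) [CommMonoid H] (a : H) : Set ℕ :=
  open Classical in
  if IsUnit a then {0}
  else {k | ∃ f : Fin k → H, (∀ i, Irreducible (f i)) ∧ a = ∏ i, f i}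

/-- The elasticity `ρ(a) = max L(a) / min L(a)` of an element of a BF-monoid,
with `ρ(a) = 1` for units. -/
noncomputable def elasticity (H : Type*) [CommMonoid H] (a : H) : ℝ :=
  open Classical in
  if IsUnit a then 1
  else ((sSup (lengthSet H a) : ℕ) : ℝ) / ((sInf (lengthSet H a) : ℕ) : ℝ)

/-- The elasticity `ρ(H) = sup {ρ(a) : a ∈ H} ∈ ℝ≥1 ∪ {∞}` of the monoid `H`. -/
noncomputable def monoidElasticity (H : Type*) [CommMonoid H] : EReal :=
  ⨆ a : H, ((elasticity H a : ℝ) : EReal)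

/-- The set `R̄(H)` of asymptotic elasticities `ρ̄(a) = lim_{n → ∞} ρ(aⁿ)`
of nonunits `a ∈ H` (membership requires the limit to exist). -/
def asympSet (H : Type*) [CommMonoid H] : Set EReal :=
  {r | ∃ a : H, ¬ IsUnit a ∧
    Tendsto (fun n : ℕ => ((elasticity H (a ^ n) : ℝ) : EReal)) atTop (nhds r)}

/-- `H` is locally finitely generated: for every `a ∈ H` there are only finitely many
atoms, up to associates, dividing some power of `a`. -/
def LocallyFinitelyGenerated (H : Type*) [CommMonoid H] : Prop :=
  ∀ a : H, {u : Associates H | Irreducible u ∧ ∃ n : ℕ, u ∣ Associates.mk (a ^ n)}.Finite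

/-- `H` is a BF-monoid: atomic (every nonunit has a factorization into atoms) and
all sets of lengths are finite. -/
def IsBFMonoid (H : Type*) [CommMonoid H] : Prop :=
  (∀ a : H, ¬ IsUnit a → (lengthSet H a).Nonempty) ∧ ∀ a : H, (lengthSet H a).Finite

/-- `(k, ℓ) ≠ (0,0)` is a nice pair with respect to `(a, b)` if
`max L((aᵏbˡ)ᵗ) = t · max L(aᵏbˡ)` and `min L((aᵏbˡ)ᵗ) = t · min L(aᵏbˡ)` for all `t ∈ ℕ`. -/
def IsNicePair (H : Type*) [CommMonoid H] (a b : H) (k ℓ : ℕ) : Prop :=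
  ¬ (k = 0 ∧ ℓ = 0) ∧ ∀ t : ℕ, 0 < t →
    sSup (lengthSet H ((a ^ k * b ^ ℓ) ^ t)) = t * sSup (lengthSet H (a ^ k * b ^ ℓ)) ∧
    sInf (lengthSet H ((a ^ k * b ^ ℓ) ^ t)) = t * sInf (lengthSet H (a ^ k * b ^ ℓ))

/-- `H` is strongly primary: `H ≠ H^×` and for every nonunit `a` there is `n ∈ ℕ`
such that every product of `n` nonunits of `H` is divisible by `a`. -/
def StronglyPrimary (H : Type*) [CommMonoid H] : Prop :=
  (∃ a : H, ¬ IsUnit a) ∧ ∀ a : H, ¬ IsUnit a → ∃ n : ℕ, 0 < n ∧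
    ∀ f : Fin n → H, (∀ i, ¬ IsUnit (f i)) → a ∣ ∏ i, f i

/-- `H` is half-factorial: atomic and `|L(a)| = 1` for every `a ∈ H`. -/
def IsHalfFactorial (H : Type*) [CommMonoid H] : Prop :=
  ∀ a : H, ∃ k : ℕ, lengthSet H a = {k}


noncomputable def maxL {H : Type*} [CommMonoid H] (a : H) : ℕ := sSup (lengthSet H a)
noncomputable def minL {H : Type*} [CommMonoid H] (a : H) : ℕ := sInf (lengthSet H a)

section Aux
variable {H : Type*} [CancelCommMonoid H]

lemma lengthSet_unit {a : H} (h : IsUnit a) : lengthSet H a = {0} := by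
  simp [lengthSet, h]

lemma mem_lengthSet_iff {a : H} (h : ¬ IsUnit a) {k : ℕ} :
    k ∈ lengthSet H a ↔ ∃ l : List H, (∀ x ∈ l, Irreducible x) ∧ l.length = k ∧ l.prod = a := by
  simp only [lengthSet, if_neg h, Set.mem_setOf_eq]
  constructor
  · rintro ⟨f, hf, rfl⟩
    exact ⟨List.ofFn f, by simpa using fun i => hf i, by simp, by rw [List.prod_ofFn]⟩
  · rintro ⟨l, hl, rfl, rfl⟩
    refine ⟨l.get, fun i => hl _ (l.get_mem _), ?_⟩
    rw [← List.prod_ofFn, List.ofFn_get]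

lemma isUnit_of_isUnit_prod {l : List H} (h : IsUnit l.prod) : ∀ x ∈ l, IsUnit x := by
  induction l with
  | nil => simp
  | cons a t ih =>
    simp only [List.prod_cons] at h
    intro x hx
    rcases List.mem_cons.1 hx with rfl | hx
    · exact isUnit_of_mul_isUnit_left h
    · exact ih (isUnit_of_mul_isUnit_right h) x hx

/-- list version of the strongly primary property -/
lemma sp_list (hsp : StronglyPrimary H) {a : H} (ha : ¬ IsUnit a) :
    ∃ n : ℕ, 0 < n ∧ ∀ l : List H, (∀ x ∈ l, ¬ IsUnit x) → n ≤ l.length → a ∣ l.prod := by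
  obtain ⟨n, hn, hdvd⟩ := hsp.2 a ha
  refine ⟨n, hn, fun l hl hlen => ?_⟩
  have h1 : a ∣ (l.take n).prod := by
    have hlt : (l.take n).length = n := by simp [Nat.min_eq_left hlen]
    have := hdvd (fun i => (l.take n).get (Fin.cast hlt.symm i))
      (fun i => hl _ (List.mem_of_mem_take (List.get_mem _ _)))
    have hp : ∏ i : Fin n, (l.take n).get (Fin.cast hlt.symm i) = (l.take n).prod := by
      rw [← List.prod_ofFn]
      congr 1
      apply List.ext_getElem
      · simp [hlt]
      · intro i h1 h2
        simp
    rw [hp] at this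
    exact this
  calc a ∣ (l.take n).prod := h1
    _ ∣ l.prod := ⟨(l.drop n).prod, by rw [← List.prod_append, List.take_append_drop]⟩

/-- iterated extraction: `a ^ k` divides any product of at least `k * n` nonunits -/
lemma sp_pow_dvd {a : H} {n : ℕ}
    (hdvd : ∀ l : List H, (∀ x ∈ l, ¬ IsUnit x) → n ≤ l.length → a ∣ l.prod)
    (k : ℕ) : ∀ l : List H, (∀ x ∈ l, ¬ IsUnit x) → k * n ≤ l.length → a ^ k ∣ l.prod := by
  induction k with
  | zero => intro l _ _; simpa using one_dvd _
  | succ k ih =>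
    intro l hl hlen
    have hnl : n ≤ l.length := le_trans (Nat.le_mul_of_pos_left n (Nat.succ_pos k)) hlen
    have h1 : a ∣ (l.take n).prod :=
      hdvd _ (fun x hx => hl x (List.mem_of_mem_take hx)) (by simp [Nat.min_eq_left hnl])
    have h2 : a ^ k ∣ (l.drop n).prod := by
      refine ih _ (fun x hx => hl x (List.mem_of_mem_drop hx)) ?_
      simp only [List.length_drop]
      have : (k + 1) * n = k * n + n := by ring
      omega
    have hm := mul_dvd_mul h1 h2
    rw [← List.prod_append, List.take_append_drop] at hm
    rwa [← pow_succ'] at hm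

/-- any representation of `a` as a product of nonunits has bounded length -/
lemma rep_length_le (hsp : StronglyPrimary H) {a : H} (ha : ¬ IsUnit a) :
    ∃ N : ℕ, ∀ l : List H, (∀ x ∈ l, ¬ IsUnit x) → l.prod = a → l.length ≤ N := by
  obtain ⟨n, hn, hdvd⟩ := sp_list hsp ha
  refine ⟨n, fun l hl hprod => ?_⟩
  by_contra hlen
  push_neg at hlen
  have h1 : a ∣ (l.take n).prod :=
    hdvd _ (fun x hx => hl x (List.mem_of_mem_take hx)) (by simp [Nat.min_eq_left hlen.le])
  obtain ⟨c, hc⟩ := h1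
  have hd : l.drop n ≠ [] := by
    intro h
    have := congrArg List.length h
    simp only [List.length_drop, List.length_nil] at this
    omega
  have : a = a * (c * (l.drop n).prod) := by
    conv_lhs => rw [← hprod, ← List.take_append_drop n l, List.prod_append, hc]
    rw [mul_assoc]
  have h1 : a * 1 = a * (c * (l.drop n).prod) := by rw [mul_one]; exact this
  have h2 : (1 : H) = c * (l.drop n).prod := mul_left_cancel h1
  have : IsUnit ((l.drop n).prod) := isUnit_of_mul_isUnit_right (h2 ▸ isUnit_one)
  obtain ⟨x, hx⟩ := List.exists_mem_of_ne_nil _ hd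
  exact hl x (List.mem_of_mem_drop hx) (isUnit_of_isUnit_prod this x hx)


lemma exists_irred_fact (hsp : StronglyPrimary H) {a : H} (ha : ¬ IsUnit a) :
    ∃ l : List H, (∀ x ∈ l, Irreducible x) ∧ l.prod = a := by
  obtain ⟨N, hN⟩ := rep_length_le hsp ha
  set K := {k : ℕ | ∃ l : List H, (∀ x ∈ l, ¬ IsUnit x) ∧ l.length = k ∧ l.prod = a} with hK
  have hKne : K.Nonempty := ⟨1, [a], by simpa using ha, rfl, by simp⟩
  have hKbdd : BddAbove K := by
    refine ⟨N, fun k hk => ?_⟩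
    obtain ⟨l, hl, hlen, hprod⟩ := hk
    exact hlen ▸ hN l hl hprod
  obtain ⟨l, hl, hlen, hprod⟩ := Nat.sSup_mem hKne hKbdd
  refine ⟨l, fun x hx => ?_, hprod⟩
  by_contra hxirr
  have hxu : ¬ IsUnit x := hl x hx
  rw [irreducible_iff] at hxirr
  push_neg at hxirr
  obtain ⟨u, v, hxe, hu, hv⟩ := hxirr hxu
  obtain ⟨s, t, rfl⟩ := List.append_of_mem hx
  have hmem : (sSup K) + 1 ∈ K := by
    refine ⟨s ++ u :: v :: t, ?_, ?_, ?_⟩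
    · intro y hy
      simp only [List.mem_append, List.mem_cons] at hy
      rcases hy with h1 | rfl | rfl | h1
      · exact hl y (by simp [h1])
      · exact hu
      · exact hv
      · exact hl y (by simp [h1])
    · simp only [List.length_append, List.length_cons] at hlen ⊢
      omega
    · rw [← hprod]
      simp only [List.prod_append, List.prod_cons, hxe]
      rw [mul_assoc]
  have := le_csSup hKbdd hmem
  omega

lemma lengthSet_nonempty (hsp : StronglyPrimary H) {a : H} (ha : ¬ IsUnit a) :
    (lengthSet H a).Nonempty := by
  obtain ⟨l, hl, hprod⟩ := exists_irred_fact hsp ha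
  exact ⟨l.length, (mem_lengthSet_iff ha).2 ⟨l, hl, rfl, hprod⟩⟩

lemma lengthSet_bddAbove (hsp : StronglyPrimary H) {a : H} (ha : ¬ IsUnit a) :
    BddAbove (lengthSet H a) := by
  obtain ⟨N, hN⟩ := rep_length_le hsp ha
  refine ⟨N, fun k hk => ?_⟩
  obtain ⟨l, hl, hlen, hprod⟩ := (mem_lengthSet_iff ha).1 hk
  exact hlen ▸ hN l (fun x hx => (hl x hx).not_isUnit) hprod

lemma maxL_mem (hsp : StronglyPrimary H) {a : H} (ha : ¬ IsUnit a) :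
    maxL a ∈ lengthSet H a :=
  Nat.sSup_mem (lengthSet_nonempty hsp ha) (lengthSet_bddAbove hsp ha)

lemma minL_mem (hsp : StronglyPrimary H) {a : H} (ha : ¬ IsUnit a) :
    minL a ∈ lengthSet H a :=
  Nat.sInf_mem (lengthSet_nonempty hsp ha)

lemma zero_not_mem_lengthSet {a : H} (ha : ¬ IsUnit a) : 0 ∉ lengthSet H a := by
  intro h
  obtain ⟨l, hl, hlen, hprod⟩ := (mem_lengthSet_iff ha).1 h
  rw [List.length_eq_zero_iff] at hlen
  subst hlen
  simp at hprod
  exact ha (hprod ▸ isUnit_one)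

lemma minL_pos (hsp : StronglyPrimary H) {a : H} (ha : ¬ IsUnit a) : 1 ≤ minL a := by
  rcases Nat.eq_zero_or_pos (minL a) with h | h
  · exact absurd (h ▸ minL_mem hsp ha) (zero_not_mem_lengthSet ha)
  · exact h

lemma minL_le_maxL (hsp : StronglyPrimary H) {a : H} (ha : ¬ IsUnit a) : minL a ≤ maxL a :=
  Nat.sInf_le (maxL_mem hsp ha)

lemma not_isUnit_mul {a b : H} (ha : ¬ IsUnit a) : ¬ IsUnit (a * b) :=
  fun h => ha (isUnit_of_mul_isUnit_left h)

lemma mem_lengthSet_mul {a b : H} (ha : ¬ IsUnit a) (hb : ¬ IsUnit b) {j k : ℕ}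
    (hj : j ∈ lengthSet H a) (hk : k ∈ lengthSet H b) : j + k ∈ lengthSet H (a * b) := by
  obtain ⟨l1, hl1, hlen1, hprod1⟩ := (mem_lengthSet_iff ha).1 hj
  obtain ⟨l2, hl2, hlen2, hprod2⟩ := (mem_lengthSet_iff hb).1 hk
  refine (mem_lengthSet_iff (not_isUnit_mul ha)).2 ⟨l1 ++ l2, ?_, by simp [hlen1, hlen2], by
    simp [List.prod_append, hprod1, hprod2]⟩
  intro x hx
  rcases List.mem_append.1 hx with h | h
  · exact hl1 x h
  · exact hl2 x h

lemma maxL_add_le (hsp : StronglyPrimary H) {a b : H} (ha : ¬ IsUnit a) (hb : ¬ IsUnit b) :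
    maxL a + maxL b ≤ maxL (a * b) :=
  le_csSup (lengthSet_bddAbove hsp (not_isUnit_mul ha))
    (mem_lengthSet_mul ha hb (maxL_mem hsp ha) (maxL_mem hsp hb))

lemma minL_mul_le (hsp : StronglyPrimary H) {a b : H} (ha : ¬ IsUnit a) (hb : ¬ IsUnit b) :
    minL (a * b) ≤ minL a + minL b :=
  Nat.sInf_le (mem_lengthSet_mul ha hb (minL_mem hsp ha) (minL_mem hsp hb))

lemma lengthSet_mul_unit {a u : H} (ha : ¬ IsUnit a) (hu : IsUnit u) :
    lengthSet H (a * u) = lengthSet H a := by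
  have key : ∀ (b v : H), ¬ IsUnit b → IsUnit v → lengthSet H b ⊆ lengthSet H (b * v) := by
    intro b v hb hv k hk
    obtain ⟨l, hl, hlen, hprod⟩ := (mem_lengthSet_iff hb).1 hk
    have hlne : l ≠ [] := by
      intro h; subst h; simp at hprod; exact hb (hprod ▸ isUnit_one)
    obtain ⟨x, t, rfl⟩ := List.exists_cons_of_ne_nil hlne
    refine (mem_lengthSet_iff (not_isUnit_mul hb)).2 ⟨(x * v) :: t, ?_, by simpa using hlen, ?_⟩
    · intro y hy
      rcases List.mem_cons.1 hy with rfl | h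
      · exact (irreducible_mul_isUnit hv).2 (hl x (by simp))
      · exact hl y (by simp [h])
    · simp only [List.prod_cons] at hprod ⊢
      rw [← hprod]
      rw [mul_assoc, mul_comm v, ← mul_assoc]
  apply Set.Subset.antisymm
  · intro k hk
    have h2 := key (a * u) (hu.unit⁻¹ : Hˣ) (not_isUnit_mul ha) (Units.isUnit _) hk
    have : a * u * (hu.unit⁻¹ : Hˣ) = a := by
      rw [mul_assoc]
      simp [IsUnit.mul_val_inv hu]
    rwa [this] at h2
  · exact key a u ha hu

end Aux
section Aux2
variable {H : Type*} [CancelCommMonoid H]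

lemma not_isUnit_pow {a : H} (ha : ¬ IsUnit a) {n : ℕ} (hn : 0 < n) : ¬ IsUnit (a ^ n) := by
  intro h
  exact ha ((isUnit_pow_iff hn.ne').1 h)

lemma not_isUnit_prod_of_irred {l : List H} (hne : l ≠ []) (hl : ∀ x ∈ l, Irreducible x) :
    ¬ IsUnit l.prod := by
  intro h
  obtain ⟨x, hx⟩ := List.exists_mem_of_ne_nil _ hne
  exact (hl x hx).not_isUnit (isUnit_of_isUnit_prod h x hx)

lemma maxL_le_of_dvd (hsp : StronglyPrimary H) {a b : H} (ha : ¬ IsUnit a) (hb : ¬ IsUnit b)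
    (h : a ∣ b) : maxL a ≤ maxL b := by
  obtain ⟨c, rfl⟩ := h
  by_cases hc : IsUnit c
  · unfold maxL
    rw [lengthSet_mul_unit ha hc]
  · exact le_trans (Nat.le_add_right _ _) (maxL_add_le hsp ha hc)

lemma maxL_one : maxL (1 : H) = 0 := by
  unfold maxL
  rw [lengthSet_unit isUnit_one]
  simp

lemma minL_one : minL (1 : H) = 0 := by
  unfold minL
  rw [lengthSet_unit isUnit_one]
  simp

lemma maxL_pow_super (hsp : StronglyPrimary H) {a : H} (ha : ¬ IsUnit a) (m n : ℕ) :
    maxL (a ^ m) + maxL (a ^ n) ≤ maxL (a ^ (m + n)) := by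
  rcases Nat.eq_zero_or_pos m with rfl | hm
  · simp [maxL_one]
  rcases Nat.eq_zero_or_pos n with rfl | hn
  · simp [maxL_one]
  rw [pow_add]
  exact maxL_add_le hsp (not_isUnit_pow ha hm) (not_isUnit_pow ha hn)

lemma minL_pow_sub (hsp : StronglyPrimary H) {a : H} (ha : ¬ IsUnit a) (m n : ℕ) :
    minL (a ^ (m + n)) ≤ minL (a ^ m) + minL (a ^ n) := by
  rcases Nat.eq_zero_or_pos m with rfl | hm
  · simp [minL_one]
  rcases Nat.eq_zero_or_pos n with rfl | hn
  · simp [minL_one]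
  rw [pow_add]
  exact minL_mul_le hsp (not_isUnit_pow ha hm) (not_isUnit_pow ha hn)

lemma maxL_pow_ge (hsp : StronglyPrimary H) {a : H} (ha : ¬ IsUnit a) (n : ℕ) :
    n * maxL a ≤ maxL (a ^ n) := by
  induction n with
  | zero => simp [maxL_one]
  | succ n ih =>
    have h1 := maxL_pow_super hsp ha n 1
    rw [pow_one] at h1
    have h2 : (n + 1) * maxL a = n * maxL a + maxL a := by ring
    omega

lemma minL_pow_le (hsp : StronglyPrimary H) {a : H} (ha : ¬ IsUnit a) (n : ℕ) :
    minL (a ^ n) ≤ n * minL a := by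
  induction n with
  | zero => simp [minL_one]
  | succ n ih =>
    have h1 := minL_pow_sub hsp ha n 1
    rw [pow_one] at h1
    have h2 : (n + 1) * minL a = n * minL a + minL a := by ring
    omega

/-- any product of nonunits of length at least `minL c + C` is divisible by `c` once more:
`c ^ σ` divides every `x` whose minimal length is at least `σ * minL c + C`. -/
lemma block_dvd (hsp : StronglyPrimary H) {c : H} (hc : ¬ IsUnit c) {C : ℕ} (hC : 0 < C)
    (hdvd : ∀ l : List H, (∀ x ∈ l, ¬ IsUnit x) → C ≤ l.length → c ∣ l.prod) :
    ∀ σ : ℕ, ∀ x : H, ¬ IsUnit x → σ * minL c + C ≤ minL x → c ^ σ ∣ x := by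
  intro σ
  induction σ with
  | zero => intro x _ _; simpa using one_dvd x
  | succ σ ih =>
    intro x hx hlen
    obtain ⟨l, hl, hllen, hlprod⟩ := (mem_lengthSet_iff hx).1 (minL_mem hsp hx)
    have hcx : c ∣ x := by
      rw [← hlprod]
      refine hdvd l (fun y hy => (hl y hy).not_isUnit) ?_
      rw [hllen]
      omega
    obtain ⟨y, rfl⟩ := hcx
    by_cases hy : IsUnit y
    · exfalso
      have h0 : minL (c * y) = minL c := by unfold minL; rw [lengthSet_mul_unit hc hy]
      have h1 := minL_pos hsp hc
      have h2 : (σ + 1) * minL c = σ * minL c + minL c := by ring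
      omega
    · have h1 : minL (c * y) ≤ minL c + minL y := minL_mul_le hsp hc hy
      have h2 : σ * minL c + C ≤ minL y := by
        have : (σ + 1) * minL c = σ * minL c + minL c := by ring
        omega
      have := ih y hy h2
      rw [pow_succ, mul_comm (c ^ σ) c]
      exact mul_dvd_mul_left c this

/-- iterated extraction from a minimal factorization -/
lemma extract_dvd (hsp : StronglyPrimary H) {B : H} {k : ℕ} (hk : 0 < k)
    (hblock : ∀ x : H, ¬ IsUnit x → k ≤ minL x → B ∣ x) :
    ∀ n : ℕ, ∀ l : List H, l.length = n → (∀ x ∈ l, Irreducible x) → minL l.prod = l.length →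
      B ^ (l.length / k) ∣ l.prod := by
  intro n
  induction n using Nat.strong_induction_on with
  | _ n ih =>
  intro l hn hl hmin
  subst hn
  by_cases hlen : l.length < k
  · rw [Nat.div_eq_of_lt hlen]
    simpa using one_dvd _
  push_neg at hlen
  have hkne : l.take k ≠ [] := by
    intro h
    have := congrArg List.length h
    simp [Nat.min_eq_left hlen] at this
    omega
  have htne : ¬ IsUnit (l.take k).prod :=
    not_isUnit_prod_of_irred hkne (fun x hx => hl x (List.mem_of_mem_take hx))
  have htlen : (l.take k).length = k := by simp [Nat.min_eq_left hlen]
  have htmem : k ∈ lengthSet H (l.take k).prod :=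
    (mem_lengthSet_iff htne).2 ⟨l.take k, fun x hx => hl x (List.mem_of_mem_take hx), htlen, rfl⟩
  have htle : minL (l.take k).prod ≤ k := Nat.sInf_le htmem
  rcases Nat.eq_or_lt_of_le hlen with heq | hlt
  · -- l.length = k exactly
    have hdropnil : l.drop k = [] := by
      apply List.eq_nil_of_length_eq_zero
      simp [← heq]
    have hprodeq : l.prod = (l.take k).prod := by
      conv_lhs => rw [← List.take_append_drop k l]
      rw [List.prod_append, hdropnil]
      simp
    have hdvd : B ∣ l.prod := by
      rw [hprodeq]
      exact hblock _ htne (by rw [← hprodeq, hmin, ← heq])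
    have : l.length / k = 1 := by rw [← heq, Nat.div_self hk]
    rw [this, pow_one]
    exact hdvd
  · -- k < l.length
    have hdne : l.drop k ≠ [] := by
      intro h
      have := congrArg List.length h
      simp at this
      omega
    have hdirr : ∀ x ∈ l.drop k, Irreducible x := fun x hx => hl x (List.mem_of_mem_drop hx)
    have hdnu : ¬ IsUnit (l.drop k).prod := not_isUnit_prod_of_irred hdne hdirr
    have hsplit : l.prod = (l.take k).prod * (l.drop k).prod := by
      rw [← List.prod_append, List.take_append_drop]
    have hdlen : (l.drop k).length = l.length - k := by simp
    have hdmem : (l.drop k).length ∈ lengthSet H (l.drop k).prod :=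
      (mem_lengthSet_iff hdnu).2 ⟨l.drop k, hdirr, rfl, rfl⟩
    have hdle : minL (l.drop k).prod ≤ (l.drop k).length := Nat.sInf_le hdmem
    have hsub : minL l.prod ≤ minL (l.take k).prod + minL (l.drop k).prod := by
      rw [hsplit]
      exact minL_mul_le hsp htne hdnu
    -- forced equalities
    have htake_min : k ≤ minL (l.take k).prod := by omega
    have hdrop_min : minL (l.drop k).prod = (l.drop k).length := by omega
    have hB1 : B ∣ (l.take k).prod := hblock _ htne htake_min
    have hB2 : B ^ ((l.drop k).length / k) ∣ (l.drop k).prod :=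
      ih (l.drop k).length (by simp; omega) (l.drop k) rfl hdirr hdrop_min
    have hcomb := mul_dvd_mul hB1 hB2
    rw [← hsplit] at hcomb
    have hdiv : l.length / k = (l.length - k) / k + 1 := Nat.div_eq_sub_div hk hlen
    rw [hdiv, ← hdlen, pow_succ, mul_comm (B ^ _) B]
    exact hcomb

end Aux2
section Aux3
variable {H : Type*} [CancelCommMonoid H]

/-- generic length bound from a divisibility property -/
lemma rep_length_le_general {a : H} {M : ℕ}
    (hdvd : ∀ l : List H, (∀ x ∈ l, ¬ IsUnit x) → M ≤ l.length → a ∣ l.prod) :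
    ∀ l : List H, (∀ x ∈ l, ¬ IsUnit x) → l.prod = a → l.length ≤ M := by
  intro l hl hprod
  by_contra hlen
  push_neg at hlen
  have h1 : a ∣ (l.take M).prod :=
    hdvd _ (fun x hx => hl x (List.mem_of_mem_take hx)) (by simp [Nat.min_eq_left hlen.le])
  obtain ⟨c, hc⟩ := h1
  have hd : l.drop M ≠ [] := by
    intro h
    have := congrArg List.length h
    simp only [List.length_drop, List.length_nil] at this
    omega
  have heq : a * 1 = a * (c * (l.drop M).prod) := by
    rw [mul_one]
    conv_lhs => rw [← hprod, ← List.take_append_drop M l, List.prod_append, hc]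
    rw [mul_assoc]
  have h2 : (1 : H) = c * (l.drop M).prod := mul_left_cancel heq
  have hunit : IsUnit ((l.drop M).prod) := isUnit_of_mul_isUnit_right (h2 ▸ isUnit_one)
  obtain ⟨x, hx⟩ := List.exists_mem_of_ne_nil _ hd
  exact hl x (List.mem_of_mem_drop hx) (isUnit_of_isUnit_prod hunit x hx)

/-- linear bound on maximal lengths of powers -/
lemma maxL_pow_linear (hsp : StronglyPrimary H) {a : H} (ha : ¬ IsUnit a) :
    ∃ N : ℕ, 0 < N ∧ ∀ n : ℕ, maxL (a ^ n) ≤ n * N := by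
  obtain ⟨N, hN, hdvd⟩ := sp_list hsp ha
  refine ⟨N, hN, fun n => ?_⟩
  rcases Nat.eq_zero_or_pos n with rfl | hn
  · simp [maxL_one]
  have hb := rep_length_le_general (a := a ^ n) (M := n * N)
    (fun l hl hlen => by
      have := sp_pow_dvd hdvd n l hl (by omega)
      exact this)
  obtain ⟨l, hl, hlen, hprod⟩ :=
    (mem_lengthSet_iff (not_isUnit_pow ha hn)).1 (maxL_mem hsp (not_isUnit_pow ha hn))
  rw [← hlen]
  exact hb l (fun x hx => (hl x hx).not_isUnit) hprod

/-- Fekete for the max length sequence -/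
lemma exists_tendsto_maxL (hsp : StronglyPrimary H) {a : H} (ha : ¬ IsUnit a) :
    ∃ L : ℝ, 1 ≤ L ∧
      Tendsto (fun n : ℕ => (maxL (a ^ n) : ℝ) / n) atTop (𝓝 L) := by
  obtain ⟨N, hN, hbound⟩ := maxL_pow_linear hsp ha
  set u : ℕ → ℝ := fun n => -(maxL (a ^ n) : ℝ) with hu
  have hsub : Subadditive u := by
    intro m n
    have := maxL_pow_super hsp ha m n
    simp only [hu]
    have h2 : ((maxL (a ^ m) : ℝ) + maxL (a ^ n)) ≤ (maxL (a ^ (m + n)) : ℝ) := by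
      exact_mod_cast this
    linarith
  have hbdd : BddBelow (Set.range fun n : ℕ => u n / n) := by
    refine ⟨-(N : ℝ), fun x hx => ?_⟩
    obtain ⟨n, rfl⟩ := hx
    rcases Nat.eq_zero_or_pos n with rfl | hn
    · show -(N:ℝ) ≤ -(maxL (a ^ 0) : ℝ) / (0:ℕ)
      rw [pow_zero, maxL_one]
      norm_num
    · have h1 : (maxL (a ^ n) : ℝ) ≤ n * N := by exact_mod_cast hbound n
      have h2 : (0:ℝ) < n := by exact_mod_cast hn
      simp only [hu]
      rw [neg_div, neg_le_neg_iff, div_le_iff₀ h2]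
      linarith
  have htend := hsub.tendsto_lim hbdd
  refine ⟨-hsub.lim, ?_, ?_⟩
  · have hge : ∀ n : ℕ, 1 ≤ n → (1 : ℝ) ≤ (maxL (a ^ n) : ℝ) / n := by
      intro n hn
      have h1 : n * 1 ≤ n * maxL a := by
        have := minL_pos hsp ha
        have := minL_le_maxL hsp ha
        exact Nat.mul_le_mul_left n (by omega)
      have h2 : n * maxL a ≤ maxL (a ^ n) := maxL_pow_ge hsp ha n
      have h3 : (n : ℝ) ≤ (maxL (a ^ n) : ℝ) := by
        have := le_trans h1 h2
        exact_mod_cast (by omega : n ≤ maxL (a ^ n))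
      have h4 : (0:ℝ) < n := by exact_mod_cast hn
      rw [le_div_iff₀ h4]
      linarith
    have : Tendsto (fun n : ℕ => (maxL (a ^ n) : ℝ) / n) atTop (𝓝 (-hsub.lim)) := by
      have := htend.neg
      simp only [hu, neg_div, neg_neg] at this
      exact this
    exact ge_of_tendsto this (eventually_atTop.2 ⟨1, hge⟩)
  · have := htend.neg
    simp only [hu, neg_div, neg_neg] at this
    exact this

/-- Fekete for the min length sequence -/
lemma exists_tendsto_minL (hsp : StronglyPrimary H) {a : H} (ha : ¬ IsUnit a) :
    ∃ M : ℝ, 0 ≤ M ∧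
      Tendsto (fun n : ℕ => (minL (a ^ n) : ℝ) / n) atTop (𝓝 M) := by
  set u : ℕ → ℝ := fun n => (minL (a ^ n) : ℝ) with hu
  have hsub : Subadditive u := by
    intro m n
    have := minL_pow_sub hsp ha m n
    simp only [hu]
    exact_mod_cast this
  have hbdd : BddBelow (Set.range fun n : ℕ => u n / n) := by
    refine ⟨0, fun x hx => ?_⟩
    obtain ⟨n, rfl⟩ := hx
    positivity
  have htend := hsub.tendsto_lim hbdd
  refine ⟨hsub.lim, ?_, htend⟩
  exact ge_of_tendsto htend (eventually_atTop.2 ⟨1, fun n _ => by positivity⟩)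

end Aux3
section Core
set_option maxHeartbeats 1000000
variable {H : Type*} [CancelCommMonoid H]

lemma core_ineq (hsp : StronglyPrimary H) {a b : H} (ha : ¬ IsUnit a) (hb : ¬ IsUnit b)
    {La Ma Lb Mb : ℝ}
    (hLa : Tendsto (fun n : ℕ => (maxL (a ^ n) : ℝ) / n) atTop (𝓝 La))
    (hMa : Tendsto (fun n : ℕ => (minL (a ^ n) : ℝ) / n) atTop (𝓝 Ma))
    (hLb : Tendsto (fun n : ℕ => (maxL (b ^ n) : ℝ) / n) atTop (𝓝 Lb))
    (hMb : Tendsto (fun n : ℕ => (minL (b ^ n) : ℝ) / n) atTop (𝓝 Mb))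
    (hLa1 : 1 ≤ La) (hLb1 : 1 ≤ Lb) (hMa0 : 0 ≤ Ma) (hMb0 : 0 ≤ Mb) :
    Lb * Ma ≤ La * Mb := by
  rcases eq_or_lt_of_le hMa0 with hMaz | hMapos
  · rw [← hMaz, mul_zero]
    exact mul_nonneg (by linarith) hMb0
  -- main case: Ma > 0
  have stepD : ∀ ε : ℝ, 0 < ε → ε < 1 → (Lb - ε) * Ma ≤ La * Mb := by
    intro ε hε hε1
    -- Step C : reduce to a bound for each h
    have stepC : ∀ h : ℕ, 1 ≤ h → (Lb - ε) * Ma * h ≤ La * (minL (b ^ h) : ℝ) := by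
      intro h hh
      have hhpos : (0:ℝ) < h := by exact_mod_cast hh
      set c : H := b ^ h with hcdef
      have hc : ¬ IsUnit c := not_isUnit_pow hb hh
      obtain ⟨C, hCpos, hCdvd⟩ := sp_list hsp hc
      -- Step A : the basic counting bound, for every σ
      have stepA : ∀ σ : ℕ, 1 ≤ σ →
          (Lb - ε) * Ma * ((h : ℝ) * σ) ≤ La * ((σ : ℝ) * minL c + C) := by
        intro σ hσ
        have hσpos : (0:ℝ) < σ := by exact_mod_cast hσ
        set k : ℕ := σ * minL c + C with hkdef
        have hk : 0 < k := by omega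
        have hkpos : (0:ℝ) < k := by exact_mod_cast hk
        have hknz : (k:ℝ) ≠ 0 := ne_of_gt hkpos
        have hblock : ∀ x : H, ¬ IsUnit x → k ≤ minL x → c ^ σ ∣ x :=
          block_dvd hsp hc hCpos hCdvd σ
        -- extraction
        have hdvdn : ∀ n : ℕ, 1 ≤ n → (c ^ σ) ^ (minL (a ^ n) / k) ∣ a ^ n := by
          intro n hn
          have han : ¬ IsUnit (a ^ n) := not_isUnit_pow ha hn
          obtain ⟨l, hl, hlen, hprod⟩ := (mem_lengthSet_iff han).1 (minL_mem hsp han)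
          have hext := extract_dvd hsp hk hblock l.length l rfl hl (by rw [hprod, hlen])
          rw [hlen, hprod] at hext
          exact hext
        -- eventual lower bound for maxL of powers of b
        have hev : ∀ᶠ N : ℕ in atTop, Lb - ε ≤ (maxL (b ^ N) : ℝ) / N :=
          hLb.eventually (eventually_ge_nhds (by linarith))
        obtain ⟨N₁, hN₁⟩ := eventually_atTop.1 hev
        set N₀ : ℕ := max N₁ 1 with hN₀def
        have hNbound : ∀ N : ℕ, N₀ ≤ N → (Lb - ε) * N ≤ (maxL (b ^ N) : ℝ) := by
          intro N hN
          have hNpos : (0:ℝ) < N := by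
            have : 1 ≤ N := le_trans (le_max_right _ _) hN
            exact_mod_cast this
          have := hN₁ N (le_trans (le_max_left _ _) hN)
          rw [le_div_iff₀ hNpos] at this
          exact this
        -- q tends to infinity
        set q : ℕ → ℕ := fun n => minL (a ^ n) / k with hqdef
        have hminf : Tendsto (fun n : ℕ => (minL (a ^ n) : ℝ)) atTop atTop := by
          have h1 : Tendsto (fun n : ℕ => ((minL (a ^ n) : ℝ) / n) * n) atTop atTop :=
            hMa.pos_mul_atTop hMapos tendsto_natCast_atTop_atTop
          refine h1.congr' ?_
          filter_upwards [eventually_ge_atTop 1] with n hn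
          have hnz : (n:ℝ) ≠ 0 := by positivity
          field_simp
        have hdivlt : ∀ n : ℕ, (minL (a ^ n) : ℝ) < ((q n : ℝ) + 1) * k := by
          intro n
          have hlt : minL (a ^ n) < (q n + 1) * k :=
            (Nat.div_lt_iff_lt_mul hk).1 (Nat.lt_succ_self _)
          exact_mod_cast hlt
        have hqlow : ∀ n : ℕ, (minL (a ^ n) : ℝ) / k - 1 ≤ (q n : ℝ) := by
          intro n
          have h5 := hdivlt n
          have h6 : ((q n : ℝ) + 1) * k = (q n : ℝ) * k + k := by ring
          rw [sub_le_iff_le_add, div_le_iff₀ hkpos, add_mul, one_mul]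
          linarith
        have hqR : Tendsto (fun n : ℕ => ((q n : ℕ) : ℝ)) atTop atTop := by
          have h1 := tendsto_atTop_add_const_right atTop (-1 : ℝ)
            (hminf.atTop_div_const hkpos)
          simp only [← sub_eq_add_neg] at h1
          exact tendsto_atTop_mono hqlow h1
        have hqnat : Tendsto q atTop atTop := tendsto_natCast_atTop_iff.mp hqR
        -- per-n eventual inequality
        have hper : ∀ᶠ n : ℕ in atTop,
            (Lb - ε) * ((h : ℝ) * σ) * ((minL (a ^ n) : ℝ) / ↑n / ↑k - 1 / ↑n)
              ≤ (maxL (a ^ n) : ℝ) / n := by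
          filter_upwards [eventually_ge_atTop 1, hqnat.eventually_ge_atTop 1,
            hqnat.eventually_ge_atTop N₀] with n hn hq1 hqN₀'
          have hqN₀ : N₀ ≤ h * σ * q n := le_trans hqN₀'
            (Nat.le_mul_of_pos_left _ (Nat.mul_pos hh hσ))
          have hnpos : (0:ℝ) < n := by exact_mod_cast hn
          have hnnz : (n:ℝ) ≠ 0 := ne_of_gt hnpos
          have han : ¬ IsUnit (a ^ n) := not_isUnit_pow ha hn
          have hdd : b ^ (h * σ * q n) ∣ a ^ n := by
            have h8 := hdvdn n hn
            rw [hcdef, ← pow_mul, ← pow_mul] at h8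
            have h7 : h * σ * q n = h * (σ * (minL (a ^ n) / k)) := by
              simp only [hqdef]
              ring
            rw [h7]
            exact h8
          have hmax1 : maxL (b ^ (h * σ * q n)) ≤ maxL (a ^ n) :=
            maxL_le_of_dvd hsp (not_isUnit_pow hb (Nat.mul_pos (Nat.mul_pos hh hσ) hq1)) han hdd
          have hNb : (Lb - ε) * (↑(h * σ * q n) : ℝ) ≤ (maxL (b ^ (h * σ * q n)) : ℝ) :=
            hNbound _ hqN₀
          have hchain : (Lb - ε) * (↑(h * σ * q n) : ℝ) ≤ (maxL (a ^ n) : ℝ) := by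
            refine le_trans hNb ?_
            exact_mod_cast hmax1
          have hql := hqlow n
          have hfac : (0:ℝ) ≤ (Lb - ε) * ((h:ℝ) * σ) :=
            mul_nonneg (by linarith) (by positivity)
          have h2 : (Lb - ε) * ((h:ℝ) * σ) * ((minL (a ^ n) : ℝ) / k - 1)
              ≤ (Lb - ε) * (↑(h * σ * q n) : ℝ) := by
            have h5 := mul_le_mul_of_nonneg_left hql hfac
            have h6 : (Lb - ε) * ((h:ℝ) * σ) * (q n : ℝ) = (Lb - ε) * (↑(h * σ * q n) : ℝ) := by
              push_cast
              ring
            linarith [h5, h6.le, h6.ge]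
          have h3 : (Lb - ε) * ((h:ℝ) * σ) * ((minL (a ^ n) : ℝ) / k - 1)
              ≤ (maxL (a ^ n) : ℝ) := le_trans h2 hchain
          calc (Lb - ε) * ((h : ℝ) * σ) * ((minL (a ^ n) : ℝ) / ↑n / ↑k - 1 / ↑n)
              = ((Lb - ε) * ((h:ℝ) * σ) * ((minL (a ^ n) : ℝ) / k - 1)) / n := by
                field_simp
            _ ≤ (maxL (a ^ n) : ℝ) / n := by gcongr
        -- take limits in n
        have hlim1 : Tendsto
            (fun n : ℕ => (Lb - ε) * ((h : ℝ) * σ) * ((minL (a ^ n) : ℝ) / ↑n / ↑k - 1 / ↑n))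
            atTop (𝓝 ((Lb - ε) * ((h : ℝ) * σ) * (Ma / k - 0))) :=
          (((hMa.div_const _).sub tendsto_one_div_atTop_nhds_zero_nat).const_mul _)
        have hfinal : (Lb - ε) * ((h:ℝ) * σ) * (Ma / k - 0) ≤ La :=
          le_of_tendsto_of_tendsto hlim1 hLa hper
        rw [sub_zero] at hfinal
        have hmul := mul_le_mul_of_nonneg_right hfinal (le_of_lt hkpos)
        have hLHS : (Lb - ε) * ((h:ℝ) * σ) * (Ma / k) * k = (Lb - ε) * Ma * ((h:ℝ) * σ) := by
          field_simp
        have hkR : (k : ℝ) = (σ : ℝ) * minL c + C := by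
          rw [hkdef]
          push_cast
          ring
        rw [hLHS, hkR] at hmul
        exact hmul
      -- Step B : let σ → ∞
      have hσseq : Tendsto (fun σ : ℕ => La * (minL c : ℝ) + (La * C) / σ) atTop
          (𝓝 (La * (minL c : ℝ) + 0)) :=
        tendsto_const_nhds.add (tendsto_const_div_atTop_nhds_zero_nat _)
      rw [add_zero] at hσseq
      refine ge_of_tendsto hσseq ?_
      filter_upwards [eventually_ge_atTop 1] with σ hσ
      have h1 := stepA σ hσ
      have hσpos : (0:ℝ) < σ := by exact_mod_cast hσ
      have e1 : (Lb - ε) * Ma * (h:ℝ) * σ = (Lb - ε) * Ma * ((h:ℝ) * σ) := by ring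
      have e2 : (La * (minL c : ℝ) + (La * C) / σ) * σ = La * ((σ:ℝ) * minL c + C) := by
        field_simp
      have h2 : (Lb - ε) * Ma * (h:ℝ) * σ ≤ (La * (minL c : ℝ) + (La * C) / σ) * σ := by
        rw [e1, e2]
        exact h1
      exact le_of_mul_le_mul_right h2 hσpos
    -- Step C → D : let h → ∞
    have hhlim : Tendsto (fun h : ℕ => La * ((minL (b ^ h) : ℝ) / h)) atTop (𝓝 (La * Mb)) :=
      hMb.const_mul La
    refine ge_of_tendsto hhlim ?_
    filter_upwards [eventually_ge_atTop 1] with h hh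
    have h1 := stepC h hh
    have hhpos : (0:ℝ) < h := by exact_mod_cast hh
    rw [← mul_div_assoc, le_div_iff₀ hhpos]
    exact h1
  -- Step D → conclusion
  by_contra hcon
  push_neg at hcon
  set ε : ℝ := min (1/2) ((Lb * Ma - La * Mb) / (2 * Ma)) with hεdef
  have hdiffpos : 0 < Lb * Ma - La * Mb := by linarith
  have hεpos : 0 < ε := lt_min (by norm_num) (div_pos hdiffpos (by linarith))
  have hε1 : ε < 1 := lt_of_le_of_lt (min_le_left _ _) (by norm_num)
  have hD := stepD ε hεpos hε1
  have hεle : ε ≤ (Lb * Ma - La * Mb) / (2 * Ma) := min_le_right _ _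
  have h3 : ((Lb * Ma - La * Mb) / (2 * Ma)) * Ma = (Lb * Ma - La * Mb) / 2 := by
    field_simp
  have h2 : ε * Ma ≤ (Lb * Ma - La * Mb) / 2 := by
    have := mul_le_mul_of_nonneg_right hεle (le_of_lt hMapos)
    linarith [this, h3.le, h3.ge]
  nlinarith [hD]
end Core
section Final
variable {H : Type*} [CancelCommMonoid H]

lemma elasticity_eq {a : H} (ha : ¬ IsUnit a) :
    elasticity H a = (maxL a : ℝ) / (minL a : ℝ) := by
  simp [elasticity, ha, maxL, minL]

lemma elasticity_of_unit {a : H} (ha : IsUnit a) : elasticity H a = 1 := by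
  simp [elasticity, ha]

lemma one_le_elasticity (hsp : StronglyPrimary H) {a : H} (ha : ¬ IsUnit a) :
    1 ≤ elasticity H a := by
  rw [elasticity_eq ha]
  have h1 := minL_pos hsp ha
  have h2 := minL_le_maxL hsp ha
  have hpos : (0:ℝ) < (minL a : ℝ) := by exact_mod_cast h1
  rw [le_div_iff₀ hpos, one_mul]
  exact_mod_cast h2

lemma elasticity_le_pow (hsp : StronglyPrimary H) {a : H} (ha : ¬ IsUnit a) {n : ℕ}
    (hn : 1 ≤ n) : elasticity H a ≤ elasticity H (a ^ n) := by
  have han : ¬ IsUnit (a ^ n) := not_isUnit_pow ha hn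
  rw [elasticity_eq ha, elasticity_eq han]
  have h1 := minL_pos hsp ha
  have h1n := minL_pos hsp han
  have hpos : (0:ℝ) < (minL a : ℝ) := by exact_mod_cast h1
  have hposn : (0:ℝ) < (minL (a ^ n) : ℝ) := by exact_mod_cast h1n
  rw [div_le_div_iff₀ hpos hposn]
  have hkey : maxL a * minL (a ^ n) ≤ maxL (a ^ n) * minL a := by
    calc maxL a * minL (a ^ n) ≤ maxL a * (n * minL a) :=
          Nat.mul_le_mul_left _ (minL_pow_le hsp ha n)
      _ = (n * maxL a) * minL a := by ring
      _ ≤ maxL (a ^ n) * minL a := Nat.mul_le_mul_right _ (maxL_pow_ge hsp ha n)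
  exact_mod_cast hkey

noncomputable def rbar (H : Type*) [CommMonoid H] (a : H) : EReal :=
  limUnder atTop (fun n : ℕ => ((elasticity H (a ^ n) : ℝ) : EReal))

lemma rbar_spec (hsp : StronglyPrimary H) {a : H} (ha : ¬ IsUnit a) {La Ma : ℝ}
    (hLa : Tendsto (fun n : ℕ => (maxL (a ^ n) : ℝ) / n) atTop (𝓝 La))
    (hMa : Tendsto (fun n : ℕ => (minL (a ^ n) : ℝ) / n) atTop (𝓝 Ma))
    (hLa1 : 1 ≤ La) (hMa0 : 0 ≤ Ma) :
    Tendsto (fun n : ℕ => ((elasticity H (a ^ n) : ℝ) : EReal)) atTop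
      (𝓝 (if Ma = 0 then (⊤ : EReal) else ((La / Ma : ℝ) : EReal))) := by
  rcases eq_or_lt_of_le hMa0 with hMz | hMpos
  · rw [if_pos hMz.symm]
    rw [EReal.tendsto_nhds_top_iff_real]
    intro x
    have hrt : Tendsto (fun n : ℕ => elasticity H (a ^ n)) atTop atTop := by
      have hinv : Tendsto (fun n : ℕ => ((minL (a ^ n) : ℝ) / n)⁻¹) atTop atTop := by
        apply tendsto_inv_nhdsGT_zero.comp
        rw [tendsto_nhdsWithin_iff]
        constructor
        · rw [← hMz] at hMa
          exact hMa
        · filter_upwards [eventually_ge_atTop 1] with n hn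
          have hnpos : (0:ℝ) < n := by exact_mod_cast hn
          have h1 := minL_pos hsp (not_isUnit_pow ha hn)
          have h2 : (0:ℝ) < (minL (a ^ n) : ℝ) := by exact_mod_cast h1
          exact div_pos h2 hnpos
      have hmul : Tendsto
          (fun n : ℕ => ((maxL (a ^ n) : ℝ) / n) * ((minL (a ^ n) : ℝ) / n)⁻¹)
          atTop atTop := hLa.pos_mul_atTop (by linarith) hinv
      refine hmul.congr' ?_
      filter_upwards [eventually_ge_atTop 1] with n hn
      have hnpos : (0:ℝ) < n := by exact_mod_cast hn
      have h1 := minL_pos hsp (not_isUnit_pow ha hn)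
      have h2 : (0:ℝ) < (minL (a ^ n) : ℝ) := by exact_mod_cast h1
      rw [elasticity_eq (not_isUnit_pow ha hn)]
      rw [inv_div]
      field_simp
    filter_upwards [hrt.eventually_gt_atTop x] with n hn
    exact EReal.coe_lt_coe_iff.2 hn
  · have hMne : Ma ≠ 0 := ne_of_gt hMpos
    rw [if_neg hMne]
    rw [EReal.tendsto_coe]
    have hdiv : Tendsto
        (fun n : ℕ => ((maxL (a ^ n) : ℝ) / n) / ((minL (a ^ n) : ℝ) / n))
        atTop (𝓝 (La / Ma)) := hLa.div hMa (ne_of_gt hMpos)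
    refine hdiv.congr' ?_
    filter_upwards [eventually_ge_atTop 1] with n hn
    have hnpos : (0:ℝ) < n := by exact_mod_cast hn
    have h1 := minL_pos hsp (not_isUnit_pow ha hn)
    have h2 : (0:ℝ) < (minL (a ^ n) : ℝ) := by exact_mod_cast h1
    rw [elasticity_eq (not_isUnit_pow ha hn)]
    rw [div_div_div_comm]
    rw [div_self (ne_of_gt hnpos), div_one]

lemma tendsto_rbar (hsp : StronglyPrimary H) {a : H} (ha : ¬ IsUnit a) :
    Tendsto (fun n : ℕ => ((elasticity H (a ^ n) : ℝ) : EReal)) atTop (𝓝 (rbar H a)) := by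
  obtain ⟨La, hLa1, hLa⟩ := exists_tendsto_maxL hsp ha
  obtain ⟨Ma, hMa0, hMa⟩ := exists_tendsto_minL hsp ha
  have h := rbar_spec hsp ha hLa hMa hLa1 hMa0
  rw [rbar, h.limUnder_eq]
  exact h

lemma elasticity_le_rbar (hsp : StronglyPrimary H) {a : H} (ha : ¬ IsUnit a) :
    ((elasticity H a : ℝ) : EReal) ≤ rbar H a := by
  refine ge_of_tendsto (tendsto_rbar hsp ha) ?_
  filter_upwards [eventually_ge_atTop 1] with n hn
  exact EReal.coe_le_coe_iff.2 (elasticity_le_pow hsp ha hn)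

lemma rbar_const (hsp : StronglyPrimary H) {a b : H} (ha : ¬ IsUnit a) (hb : ¬ IsUnit b) :
    rbar H a = rbar H b := by
  obtain ⟨La, hLa1, hLa⟩ := exists_tendsto_maxL hsp ha
  obtain ⟨Ma, hMa0, hMa⟩ := exists_tendsto_minL hsp ha
  obtain ⟨Lb, hLb1, hLb⟩ := exists_tendsto_maxL hsp hb
  obtain ⟨Mb, hMb0, hMb⟩ := exists_tendsto_minL hsp hb
  have hra : rbar H a = (if Ma = 0 then (⊤ : EReal) else ((La / Ma : ℝ) : EReal)) := by
    rw [rbar, (rbar_spec hsp ha hLa hMa hLa1 hMa0).limUnder_eq]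
  have hrb : rbar H b = (if Mb = 0 then (⊤ : EReal) else ((Lb / Mb : ℝ) : EReal)) := by
    rw [rbar, (rbar_spec hsp hb hLb hMb hLb1 hMb0).limUnder_eq]
  have hab := core_ineq hsp ha hb hLa hMa hLb hMb hLa1 hLb1 hMa0 hMb0
  have hba := core_ineq hsp hb ha hLb hMb hLa hMa hLb1 hLa1 hMb0 hMa0
  rw [hra, hrb]
  rcases eq_or_lt_of_le hMa0 with hMaz | hMapos
  · rcases eq_or_lt_of_le hMb0 with hMbz | hMbpos
    · rw [if_pos hMaz.symm, if_pos hMbz.symm]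
    · exfalso
      -- hba : La * Mb ≤ Lb * Ma = 0
      rw [← hMaz, mul_zero] at hba
      have : 0 < La * Mb := mul_pos (by linarith) hMbpos
      linarith
  · rcases eq_or_lt_of_le hMb0 with hMbz | hMbpos
    · exfalso
      rw [← hMbz, mul_zero] at hab
      have : 0 < Lb * Ma := mul_pos (by linarith) hMapos
      linarith
    · have h5 : Ma ≠ 0 := ne_of_gt hMapos
      have h6 : Mb ≠ 0 := ne_of_gt hMbpos
      rw [if_neg h5, if_neg h6]
      have heq : La * Mb = Lb * Ma := le_antisymm hba hab
      congr 1
      rw [div_eq_div_iff h5 h6]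
      exact heq

end Final

/-- If `H` is strongly primary and not half-factorial, then for
every nonunit `a ∈ H` the limit `ρ̄(a) = lim ρ(aⁿ)` exists and equals `ρ(H)`;
that is, `R̄(H) = {ρ(H)}`. -/
theorem statement16 (H : Type*) [CancelCommMonoid H]
    (hsp : StronglyPrimary H) (hhf : ¬ IsHalfFactorial H) :
    (∀ a : H, ¬ IsUnit a →
      Tendsto (fun n : ℕ => ((elasticity H (a ^ n) : ℝ) : EReal)) atTop
        (nhds (monoidElasticity H))) ∧
    asympSet H = {monoidElasticity H} := by
  obtain ⟨a₀, ha₀⟩ := hsp.1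
  have hMEle : monoidElasticity H ≤ rbar H a₀ := by
    apply iSup_le
    intro x
    by_cases hx : IsUnit x
    · rw [elasticity_of_unit hx]
      calc ((1:ℝ) : EReal) ≤ ((elasticity H a₀ : ℝ) : EReal) :=
            EReal.coe_le_coe_iff.2 (one_le_elasticity hsp ha₀)
        _ ≤ rbar H a₀ := elasticity_le_rbar hsp ha₀
    · calc ((elasticity H x : ℝ) : EReal) ≤ rbar H x := elasticity_le_rbar hsp hx
        _ = rbar H a₀ := rbar_const hsp hx ha₀
  have hMEge : rbar H a₀ ≤ monoidElasticity H :=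
    le_of_tendsto (tendsto_rbar hsp ha₀)
      (Eventually.of_forall fun n =>
        le_iSup (fun x : H => ((elasticity H x : ℝ) : EReal)) (a₀ ^ n))
  have hME : monoidElasticity H = rbar H a₀ := le_antisymm hMEle hMEge
  constructor
  · intro a ha
    rw [hME, rbar_const hsp ha₀ ha]
    exact tendsto_rbar hsp ha
  · ext r
    simp only [asympSet, Set.mem_setOf_eq, Set.mem_singleton_iff]
    constructor
    · rintro ⟨a, ha, hl⟩
      have h2 := tendsto_rbar hsp ha
      have h3 := tendsto_nhds_unique hl h2
      rw [h3, hME, rbar_const hsp ha₀ ha]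
    · rintro rfl
      refine ⟨a₀, ha₀, ?_⟩
      rw [hME]
      exact tendsto_rbar hsp ha₀
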